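/- For the binary symmetric channel BSC(p) with uniform input, let I(W) = 1 − H(Z|W(Z)) = 1 − h(p) be its symmetric capacity, and let W^⊥ be its dual, a channel with pure qubit outputs √p|0⟩ + (−1)^x√(1−p)|1⟩ whose symmetric capacity is I(W^⊥) = h((1−√(1−(1−2p)²))/2) computed as 1 − H(X|W^⊥(X)). Then I(W) + I(W^⊥) = 1; equivalently, H(Z|W(Z)) + H(X|W^⊥(X)) = 1, where H(X|W^⊥(X)) is the von Neumann conditional entropy of the uniform input X given the quantum output. -/

import Mathlib

/-- Von Neumann entropy (base 2) of a Hermitian matrix, via its eigenvalues. -/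
noncomputable def vnEntropy {n : Type*} [Fintype n] [DecidableEq n]
    {ρ : Matrix n n ℂ} (h : ρ.IsHermitian) : ℝ :=
  ∑ i, -(h.eigenvalues i * Real.logb 2 (h.eigenvalues i))

lemma sum_eig_aux {n : Type*} [Fintype n] [DecidableEq n] {A : Matrix n n ℂ}
    (hA : A.IsHermitian) : (↑(∑ i, hA.eigenvalues i) : ℂ) = A.trace := by
  rw [hA.trace_eq_sum_eigenvalues]
  push_cast; rfl

open Matrix in
lemma eig_sq_aux {n : Type*} [Fintype n] [DecidableEq n] {A : Matrix n n ℂ}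
    (hA : A.IsHermitian) (hsq : A * A = (1/2 : ℂ) • A) (i : n) :
    hA.eigenvalues i = 0 ∨ hA.eigenvalues i = 1/2 := by
  set l := hA.eigenvalues i with hl
  set v := ⇑(hA.eigenvectorBasis i) with hvdef
  have hv : A *ᵥ v = ((l : ℂ)) • v := by
    rw [hvdef, hA.mulVec_eigenvectorBasis i]
    funext j
    simp [Complex.real_smul]
    exact Or.inl rfl
  have hvne : v ≠ 0 := by
    have := hA.eigenvectorBasis.orthonormal.ne_zero i
    intro h; apply this; ext j; exact congrFun h j
  have h2 : (A * A) *ᵥ v = ((l : ℂ) * l) • v := by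
    rw [← Matrix.mulVec_mulVec, hv, Matrix.mulVec_smul, hv, smul_smul]
  rw [hsq, Matrix.smul_mulVec, hv, smul_smul] at h2
  have h3 : ((l : ℂ) * l - 1/2 * l) • v = 0 := by
    rw [sub_smul, h2, sub_self]
  rcases smul_eq_zero.mp h3 with h | h
  · have hc : (l : ℂ) * l = 1/2 * l := by linear_combination h
    have hr : l * l = 1/2 * l := by
      have h' : ((l * l : ℝ) : ℂ) = ((1/2 * l : ℝ) : ℂ) := by push_cast; linear_combination hc
      exact_mod_cast h'
    have : l * (l - 1/2) = 0 := by ring_nf; linarith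
    rcases mul_eq_zero.mp this with h' | h'
    · exact Or.inl h'
    · exact Or.inr (by linarith)
  · exact absurd h hvne

open Matrix in
lemma eig_diag_aux {n : Type*} [Fintype n] [DecidableEq n] {A : Matrix n n ℂ} {d : n → ℂ}
    (hA : A.IsHermitian) (hd : A = Matrix.diagonal d) (i : n) :
    ∃ j, (hA.eigenvalues i : ℂ) = d j := by
  set l := hA.eigenvalues i with hl
  set v := ⇑(hA.eigenvectorBasis i) with hvdef
  have hv : A *ᵥ v = ((l : ℂ)) • v := by
    rw [hvdef, hA.mulVec_eigenvectorBasis i]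
    funext j
    simp [Complex.real_smul]
    exact Or.inl rfl
  have hvne : v ≠ 0 := by
    have := hA.eigenvectorBasis.orthonormal.ne_zero i
    intro h; apply this; ext j; exact congrFun h j
  obtain ⟨j, hj⟩ := Function.ne_iff.mp hvne
  refine ⟨j, ?_⟩
  have := congrFun hv j
  rw [hd] at this
  simp [Matrix.mulVec_diagonal] at this
  rcases this with h | h
  · exact h.symm
  · exact absurd h hj

/-- Capacity duality for the BSC and its dual: with uniform inputs,
`H(Z|W(Z)) + H(X|W^⊥(X)) = 1`, i.e. `I(W) + I(W^⊥) = 1`.  The first term is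
the Shannon conditional entropy of the `BSC(p)` input given its output; the
second is the von Neumann conditional entropy `S(ρ_{XB}) − S(ρ_B)` for the
dual channel with pure outputs `√p|0⟩ + (−1)^x √(1−p)|1⟩`. -/
theorem stmt_14 (p : ℝ) (hp0 : 0 ≤ p) (hp1 : p ≤ 1)
    (ψ : Bool → Fin 2 → ℂ)
    (hψ : ψ = fun x =>
      ![(Real.sqrt p : ℂ), (if x then -1 else 1) * (Real.sqrt (1 - p) : ℂ)])
    (σ : Bool → Matrix (Fin 2) (Fin 2) ℂ)
    (hσ : ∀ x, σ x = fun i j => ψ x i * star (ψ x j))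
    (ρXB : Matrix (Bool × Fin 2) (Bool × Fin 2) ℂ)
    (hρXB : ρXB = fun a b => if a.1 = b.1 then (1/2 : ℂ) * σ a.1 a.2 b.2 else 0)
    (ρB : Matrix (Fin 2) (Fin 2) ℂ)
    (hρB : ρB = (1/2 : ℂ) • σ false + (1/2 : ℂ) • σ true)
    (hXB : ρXB.IsHermitian) (hB : ρB.IsHermitian) :
    let φ : Bool → Bool → ℝ := fun z y => if y = z then 1 - p else p
    let PY : Bool → ℝ := fun y => (1/2) * φ false y + (1/2) * φ true y
    let post : Bool → Bool → ℝ := fun z y => (1/2) * φ z y / PY y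
    (∑ y : Bool, PY y * ∑ z : Bool, -(post z y * Real.logb 2 (post z y))) +
      (vnEntropy hXB - vnEntropy hB) = 1 := by
  intro φ PY post
  have h1p : (0:ℝ) ≤ 1 - p := by linarith
  have hsp : (Real.sqrt p : ℂ) * (Real.sqrt p : ℂ) = (p : ℂ) := by
    rw [← Complex.ofReal_mul, Real.mul_self_sqrt hp0]
  have hsq : (Real.sqrt (1-p) : ℂ) * (Real.sqrt (1-p) : ℂ) = 1 - (p : ℂ) := by
    rw [← Complex.ofReal_mul, Real.mul_self_sqrt h1p]; push_cast; ring
  -- each σ x is a rank-one projector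
  have hproj : ∀ x, σ x * σ x = σ x := by
    intro x
    have hnorm : ∑ k, star (ψ x k) * ψ x k = 1 := by
      cases x <;> simp [hψ, Fin.sum_univ_two, Complex.star_def, Complex.conj_ofReal] <;>
        rw [hsp] <;> ring_nf <;> rw [sq, hsq] <;> ring
    ext i j
    rw [Matrix.mul_apply, hσ]
    simp only
    calc ∑ k, ψ x i * star (ψ x k) * (ψ x k * star (ψ x j))
        = (ψ x i * star (ψ x j)) * ∑ k, star (ψ x k) * ψ x k := by
          rw [Finset.mul_sum]; exact Finset.sum_congr rfl (fun k _ => by ring)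
      _ = ψ x i * star (ψ x j) := by rw [hnorm, mul_one]
  -- ρXB satisfies ρXB² = (1/2)ρXB
  have hXBsq : ρXB * ρXB = (1/2 : ℂ) • ρXB := by
    ext ⟨x, i⟩ ⟨y, j⟩
    rw [Matrix.mul_apply, Fintype.sum_prod_type]
    simp only [Matrix.smul_apply]
    simp only [hρXB, Matrix.smul_apply, smul_eq_mul]
    simp only [ite_mul, zero_mul, mul_ite, mul_zero]
    rw [Fintype.sum_bool]
    have key : ∀ x : Bool, ∑ k, 1/2 * σ x i k * (1/2 * σ x k j) = 1/2 * (1/2 * σ x i j) := by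
      intro x
      have hms : ∑ k, σ x i k * σ x k j = σ x i j := by
        rw [← Matrix.mul_apply, hproj]
      calc ∑ k, 1/2 * σ x i k * (1/2 * σ x k j)
          = 1/4 * ∑ k, σ x i k * σ x k j := by
            rw [Finset.mul_sum]; exact Finset.sum_congr rfl fun k _ => by ring
        _ = 1/2 * (1/2 * σ x i j) := by rw [hms]; ring
    cases x <;> cases y <;>
      simp only [reduceIte, reduceCtorEq, if_false, Finset.sum_const_zero, add_zero,
        zero_add, mul_zero] <;>
      try exact key _
  -- ρB is diagonal with entries p, 1-p
  have hBdiag : ρB = Matrix.diagonal ![(p : ℂ), 1 - (p : ℂ)] := by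
    ext i j
    fin_cases i <;> fin_cases j <;>
      simp only [hρB, Matrix.add_apply, Matrix.smul_apply] <;>
      simp [hρB, hσ, hψ, Matrix.diagonal, Complex.star_def, Complex.conj_ofReal] <;>
      first
        | linear_combination (1/2 : ℂ) * hsp + (1/2 : ℂ) * hsq
        | linear_combination (1/2 : ℂ) * hsp - (1/2 : ℂ) * hsq
        | linear_combination (-1/2 : ℂ) * hsp + (1/2 : ℂ) * hsq
        | linear_combination (-1/2 : ℂ) * hsp - (1/2 : ℂ) * hsq
        | linear_combination hsp
        | linear_combination hsq
  have htrXB : ρXB.trace = 1 := by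
    rw [Matrix.trace]
    rw [Fintype.sum_prod_type]
    simp [Matrix.diag, hρXB, hσ, hψ, Fin.sum_univ_two, Complex.star_def, Complex.conj_ofReal]
    linear_combination hsp + hsq
  have htrB : ρB.trace = 1 := by
    rw [hBdiag]
    simp [Matrix.trace, Matrix.diag, Fin.sum_univ_two]
  -- sums of eigenvalues
  have hsumXB : ∑ i, hXB.eigenvalues i = 1 := by
    have := sum_eig_aux hXB
    rw [htrXB] at this
    exact_mod_cast this
  have hsumB : hB.eigenvalues 0 + hB.eigenvalues 1 = 1 := by
    have := sum_eig_aux hB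
    rw [htrB] at this
    have h2 : ∑ i, hB.eigenvalues i = 1 := by exact_mod_cast this
    rwa [Fin.sum_univ_two] at h2
  have hlogb : Real.logb 2 (1/2) = -1 := by
    rw [show (1/2 : ℝ) = 2⁻¹ by norm_num, Real.logb_inv, Real.logb_self_eq_one] <;> norm_num
  -- S(ρXB) = 1
  have hvnXB : vnEntropy hXB = 1 := by
    rw [vnEntropy, ← hsumXB]
    refine Finset.sum_congr rfl fun i _ => ?_
    rcases eig_sq_aux hXB hXBsq i with h | h <;> rw [h] <;> simp [hlogb]
  -- S(ρB) = h(p)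
  have hBmem : ∀ i, hB.eigenvalues i = p ∨ hB.eigenvalues i = 1 - p := by
    intro i
    obtain ⟨j, hj⟩ := eig_diag_aux hB hBdiag i
    fin_cases j <;> simp at hj
    · left; exact_mod_cast hj
    · right
      have : (hB.eigenvalues i : ℂ) = ((1 - p : ℝ) : ℂ) := by rw [hj]; push_cast; ring
      exact_mod_cast this
  have hvnB : vnEntropy hB =
      -(p * Real.logb 2 p) + -((1 - p) * Real.logb 2 (1 - p)) := by
    rw [vnEntropy, Fin.sum_univ_two]
    rcases hBmem 0 with h0 | h0
    · have h1 : hB.eigenvalues 1 = 1 - p := by linarith [hsumB]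
      rw [h0, h1]
    · have h1 : hB.eigenvalues 1 = p := by linarith [hsumB]
      rw [h0, h1]; ring
  -- classical part
  have hPY : ∀ y, PY y = 1/2 := by
    intro y; cases y <;> simp [PY, φ] <;> ring
  have hpost : ∀ z y, post z y = φ z y := by
    intro z y; simp only [post]; rw [hPY]; ring
  rw [Fintype.sum_bool]
  simp only [Fintype.sum_bool, hpost, hPY]
  have hφff : φ false false = 1 - p := by simp [φ]
  have hφtf : φ true false = p := by simp [φ]
  have hφft : φ false true = p := by simp [φ]
  have hφtt : φ true true = 1 - p := by simp [φ]
  rw [hφff, hφtf, hφft, hφtt, hvnXB, hvnB]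
  ring
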